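/- Derivative characterization of the dynamic relay (Corollary, eq. (2.14)): Let y be a dynamic relay solution for (u, ξ). Then for a.e. t ∈ (0,T): if −1 < y(t) < 1 then y'(t) = g(u(t)); if y(t) = −1 then y'(t) = max(g(u(t)), 0); and if y(t) = 1 then y'(t) = min(g(u(t)), 0). -/

import Mathlib

open MeasureTheory Set Filter Topology

/-- The function `g(u) = k·(u − ρ₂)⁺ − k·(ρ₁ − u)⁺` driving the dynamic relay. -/
noncomputable def relayG (ρ₁ ρ₂ k u : ℝ) : ℝ :=
  k * max (u - ρ₂) 0 - k * max (ρ₁ - u) 0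

/-- `y` (with a.e. derivative `y'`) is a dynamic relay solution on `[0,T]` for input `u`
and initial state `ξ`: `y ∈ H¹(0,T)` (encoded by `y' ∈ L²(0,T)` together with the
fundamental-theorem-of-calculus representation), `y(0) = ξ`, `|y| ≤ 1` on `[0,T]`, and
`q(t) := g(u(t)) − y'(t)` satisfies `q(t)(z − y(t)) ≤ 0` for all `z ∈ [−1,1]`, a.e. `t`. -/
def IsDynRelay (T ρ₁ ρ₂ k : ℝ) (u : ℝ → ℝ) (ξ : ℝ) (y y' : ℝ → ℝ) : Prop :=
  MemLp y' 2 (volume.restrict (Ioc (0:ℝ) T)) ∧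
  y 0 = ξ ∧
  (∀ t ∈ Icc (0:ℝ) T, y t = ξ + ∫ s in (0:ℝ)..t, y' s) ∧
  (∀ t ∈ Icc (0:ℝ) T, |y t| ≤ 1) ∧
  (∀ᵐ t ∂(volume.restrict (Ioo (0:ℝ) T)),
    ∀ z ∈ Icc (-1:ℝ) 1, (relayG ρ₁ ρ₂ k (u t) - y' t) * (z - y t) ≤ 0)

/-- A.e. one-sided difference quotients of an indefinite integral of an integrable
function converge to the value of the function (Lebesgue differentiation). -/
lemma ae_onesided_quot (f : ℝ → ℝ) (hf : Integrable f volume) :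
    ∀ᵐ x ∂(volume : Measure ℝ),
      Tendsto (fun h : ℝ => (∫ s in x..(x+h), f s) / h) (𝓝[>] 0) (𝓝 (f x)) ∧
      Tendsto (fun h : ℝ => (∫ s in (x-h)..x, f s) / h) (𝓝[>] 0) (𝓝 (f x)) := by
  filter_upwards [IsUnifLocDoublingMeasure.ae_tendsto_average
    (μ := (volume : Measure ℝ)) hf.locallyIntegrable 1] with x hx
  have hδ : Tendsto (fun h : ℝ => h / 2) (𝓝[>] 0) (𝓝[>] 0) := by
    apply tendsto_nhdsWithin_of_tendsto_nhds_of_eventually_within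
    · have := ((tendsto_id (x := 𝓝[>] (0:ℝ))).mono_right nhdsWithin_le_nhds).div_const (2:ℝ)
      simpa using this
    · filter_upwards [self_mem_nhdsWithin] with h (hh : 0 < h)
      exact div_pos hh two_pos
  constructor
  · have hmem : ∀ᶠ h in 𝓝[>] (0:ℝ), x ∈ Metric.closedBall (x + h/2) (1 * (h/2)) := by
      filter_upwards [self_mem_nhdsWithin] with h (hh : 0 < h)
      simp only [Metric.mem_closedBall, Real.dist_eq, one_mul]
      have e : x - (x + h/2) = -(h/2) := by ring
      rw [e, abs_neg, abs_of_nonneg (by linarith)]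
    have := hx (fun h : ℝ => x + h/2) (fun h => h/2) hδ hmem
    refine this.congr' ?_
    filter_upwards [self_mem_nhdsWithin] with h (hh : 0 < h)
    have hball : Metric.closedBall (x + h/2) (h/2) = Icc x (x+h) := by
      rw [Real.closedBall_eq_Icc]; ring_nf
    rw [hball, setAverage_eq, MeasureTheory.integral_Icc_eq_integral_Ioc,
      ← intervalIntegral.integral_of_le (by linarith), measureReal_def, Real.volume_Icc]
    have : (x + h - x) = h := by ring
    rw [this, ENNReal.toReal_ofReal hh.le, smul_eq_mul, inv_mul_eq_div]
  · have hmem : ∀ᶠ h in 𝓝[>] (0:ℝ), x ∈ Metric.closedBall (x - h/2) (1 * (h/2)) := by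
      filter_upwards [self_mem_nhdsWithin] with h (hh : 0 < h)
      simp only [Metric.mem_closedBall, Real.dist_eq, one_mul]
      have e : x - (x - h/2) = h/2 := by ring
      rw [e, abs_of_nonneg (by linarith)]
    have := hx (fun h : ℝ => x - h/2) (fun h => h/2) hδ hmem
    refine this.congr' ?_
    filter_upwards [self_mem_nhdsWithin] with h (hh : 0 < h)
    have hball : Metric.closedBall (x - h/2) (h/2) = Icc (x-h) x := by
      rw [Real.closedBall_eq_Icc]; ring_nf
    rw [hball, setAverage_eq, MeasureTheory.integral_Icc_eq_integral_Ioc,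
      ← intervalIntegral.integral_of_le (by linarith), measureReal_def, Real.volume_Icc]
    have : (x - (x - h)) = h := by ring
    rw [this, ENNReal.toReal_ofReal hh.le, smul_eq_mul, inv_mul_eq_div]

/-- Derivative characterization of the dynamic relay (Corollary, eq. (2.14)). -/
theorem dyn_relay_derivative_characterization (T ρ₁ ρ₂ k : ℝ)
    (hT : 0 < T) (hρ : ρ₁ < ρ₂) (hk : 0 < k)
    (u : ℝ → ℝ) (hu : MemLp u 2 (volume.restrict (Ioc (0:ℝ) T)))
    (ξ : ℝ) (hξ : ξ ∈ Icc (-1:ℝ) 1)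
    (y y' : ℝ → ℝ) (hy : IsDynRelay T ρ₁ ρ₂ k u ξ y y') :
    ∀ᵐ t ∂(volume.restrict (Ioo (0:ℝ) T)),
      ((-1 < y t ∧ y t < 1) → y' t = relayG ρ₁ ρ₂ k (u t)) ∧
      (y t = -1 → y' t = max (relayG ρ₁ ρ₂ k (u t)) 0) ∧
      (y t = 1 → y' t = min (relayG ρ₁ ρ₂ k (u t)) 0) := by
  obtain ⟨hL2, hy0, hFTC, hbd, hVI⟩ := hy
  haveI : IsFiniteMeasure (volume.restrict (Ioc (0:ℝ) T)) :=
    ⟨by rw [Measure.restrict_apply_univ]; exact measure_Ioc_lt_top⟩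
  have hint : IntegrableOn y' (Ioc 0 T) volume :=
    hL2.integrable (by norm_num)
  set f : ℝ → ℝ := (Ioc (0:ℝ) T).indicator y' with hfdef
  have hfint : Integrable f volume := by
    rw [hfdef, integrable_indicator_iff measurableSet_Ioc]; exact hint
  have hrep : ∀ t ∈ Icc (0:ℝ) T, y t = ξ + ∫ s in (0:ℝ)..t, f s := by
    intro t ht
    rw [hFTC t ht]
    congr 1
    rw [intervalIntegral.integral_of_le ht.1, intervalIntegral.integral_of_le ht.1]
    apply setIntegral_congr_fun measurableSet_Ioc
    intro s hs
    exact (indicator_of_mem (show s ∈ Ioc (0:ℝ) T from ⟨hs.1, hs.2.trans ht.2⟩) y').symm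
  have hdiff : ∀ a ∈ Icc (0:ℝ) T, ∀ b ∈ Icc (0:ℝ) T, y b - y a = ∫ s in a..b, f s := by
    intro a ha b hb
    rw [hrep a ha, hrep b hb]
    have := intervalIntegral.integral_add_adjacent_intervals
      (hfint.intervalIntegrable (a := 0) (b := a))
      (hfint.intervalIntegrable (a := a) (b := b))
    linarith
  filter_upwards [hVI, ae_restrict_of_ae (ae_onesided_quot f hfint),
    ae_restrict_mem measurableSet_Ioo] with t hVIt hquot ht
  have hft : f t = y' t := indicator_of_mem (show t ∈ Ioc (0:ℝ) T from ⟨ht.1, ht.2.le⟩) y'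
  have htmem : t ∈ Icc (0:ℝ) T := ⟨ht.1.le, ht.2.le⟩
  have h1 : (relayG ρ₁ ρ₂ k (u t) - y' t) * (1 - y t) ≤ 0 :=
    hVIt 1 ⟨by norm_num, le_refl 1⟩
  have hm : (relayG ρ₁ ρ₂ k (u t) - y' t) * (-1 - y t) ≤ 0 :=
    hVIt (-1) ⟨le_refl _, by norm_num⟩
  -- small h facts
  have hsm : ∀ᶠ h in 𝓝[>] (0:ℝ), 0 < h ∧ t + h ≤ T ∧ 0 ≤ t - h := by
    have hmin : (0:ℝ) < min (T - t) t := lt_min (by linarith [ht.2]) ht.1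
    have : Ioo (0:ℝ) (min (T - t) t) ∈ 𝓝[>] (0:ℝ) :=
      Ioo_mem_nhdsGT_of_mem ⟨le_refl _, hmin⟩
    filter_upwards [this] with h hh
    have h1' := hh.2.trans_le (min_le_left _ _)
    have h2' := hh.2.trans_le (min_le_right _ _)
    exact ⟨hh.1, by linarith, by linarith⟩
  -- derivative vanishes when y t = -1
  have hderneg : y t = -1 → y' t = 0 := by
    intro hym1
    have hge : 0 ≤ f t := by
      refine ge_of_tendsto hquot.1 ?_
      filter_upwards [hsm] with h hh
      have hmem' : t + h ∈ Icc (0:ℝ) T := ⟨by linarith [ht.1, hh.1], hh.2.1⟩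
      have hylb : -1 ≤ y (t + h) := (abs_le.mp (hbd _ hmem')).1
      have := hdiff t htmem (t + h) hmem'
      rw [← this]
      apply div_nonneg (by rw [hym1] at *; linarith) hh.1.le
    have hle : f t ≤ 0 := by
      refine le_of_tendsto hquot.2 ?_
      filter_upwards [hsm] with h hh
      have hmem' : t - h ∈ Icc (0:ℝ) T := ⟨hh.2.2, by linarith [ht.2, hh.1]⟩
      have hylb : -1 ≤ y (t - h) := (abs_le.mp (hbd _ hmem')).1
      have := hdiff (t - h) hmem' t htmem
      rw [← this]
      apply div_nonpos_of_nonpos_of_nonneg (by rw [hym1] at *; linarith) hh.1.le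
    rw [← hft]; linarith
  -- derivative vanishes when y t = 1
  have hderpos : y t = 1 → y' t = 0 := by
    intro hym1
    have hle : f t ≤ 0 := by
      refine le_of_tendsto hquot.1 ?_
      filter_upwards [hsm] with h hh
      have hmem' : t + h ∈ Icc (0:ℝ) T := ⟨by linarith [ht.1, hh.1], hh.2.1⟩
      have hyub : y (t + h) ≤ 1 := (abs_le.mp (hbd _ hmem')).2
      have := hdiff t htmem (t + h) hmem'
      rw [← this]
      apply div_nonpos_of_nonpos_of_nonneg (by rw [hym1] at *; linarith) hh.1.le
    have hge : 0 ≤ f t := by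
      refine ge_of_tendsto hquot.2 ?_
      filter_upwards [hsm] with h hh
      have hmem' : t - h ∈ Icc (0:ℝ) T := ⟨hh.2.2, by linarith [ht.2, hh.1]⟩
      have hyub : y (t - h) ≤ 1 := (abs_le.mp (hbd _ hmem')).2
      have := hdiff (t - h) hmem' t htmem
      rw [← this]
      apply div_nonneg (by rw [hym1] at *; linarith) hh.1.le
    rw [← hft]; linarith
  refine ⟨?_, ?_, ?_⟩
  · rintro ⟨hlt, hgt⟩
    have hq : relayG ρ₁ ρ₂ k (u t) - y' t = 0 := by nlinarith
    linarith
  · intro hym1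
    have hz := hderneg hym1
    have hg : relayG ρ₁ ρ₂ k (u t) ≤ 0 := by
      rw [hym1] at h1; nlinarith
    rw [hz, max_eq_right hg]
  · intro hym1
    have hz := hderpos hym1
    have hg : 0 ≤ relayG ρ₁ ρ₂ k (u t) := by
      rw [hym1] at hm; nlinarith
    rw [hz, min_eq_right hg]
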